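/- arXiv:1902.05848 — 4 statements merged into one kernel-verified Lean document; each statement's English description precedes it below -/
import Mathlib

section
/- Let m ≥ 2 and d ≥ 1 be integers with gcd(m,d) = 1, and let 1 ≤ k ≤ m−1. Then the set A_k = {m, m+d, …, m+kd} is the minimal generating set of the numerical semigroup ⟨A_k⟩; in particular no element of A_k is a non-negative integer combination of the other elements. -/
/-- For m ≥ 2, d ≥ 1 with gcd(m,d) = 1 and 1 ≤ k ≤ m−1, the arithmetic progression
A_k = {m, m+d, …, m+kd} is the minimal generating set of ⟨A_k⟩: no element of A_k
is a non-negative integer combination of the other elements. -/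
theorem stmt_8 (m d k : ℕ) (hm : 2 ≤ m) (hd : 1 ≤ d) (hgcd : Nat.gcd m d = 1)
    (hk1 : 1 ≤ k) (hk2 : k ≤ m - 1)
    (A : Set ℕ) (hA : A = (fun i => m + i * d) '' {i : ℕ | i ≤ k}) :
    ∀ a ∈ A, a ∉ AddSubmonoid.closure (A \ {a}) := by
  subst hA
  rintro a ⟨i, hi, rfl⟩ hmem
  simp only [Set.mem_setOf_eq] at hi
  set A : Set ℕ := (fun i => m + i * d) '' {i : ℕ | i ≤ k} with hAdef
  have key : ∀ x ∈ AddSubmonoid.closure (A \ {m + i * d}),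
      ∃ n s : ℕ, x = n * m + s * d ∧ (n = 0 → x = 0) ∧
        (n = 1 → x ∈ A \ {m + i * d}) := by
    intro x hx
    induction hx using AddSubmonoid.closure_induction with
    | mem y hy =>
        obtain ⟨⟨j, hj, rfl⟩, hne⟩ := hy
        exact ⟨1, j, by ring, by simp, fun _ => ⟨⟨j, hj, rfl⟩, hne⟩⟩
    | zero => exact ⟨0, 0, by simp, fun _ => rfl, by simp⟩
    | add x y hx hy px py =>
        obtain ⟨n1, s1, h1, h10, h11⟩ := px
        obtain ⟨n2, s2, h2, h20, h21⟩ := py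
        refine ⟨n1 + n2, s1 + s2, by rw [h1, h2]; ring, ?_, ?_⟩
        · intro h
          have hn1 : n1 = 0 := by omega
          have hn2 : n2 = 0 := by omega
          rw [h10 hn1, h20 hn2]
        · intro h
          rcases Nat.eq_zero_or_pos n1 with hn1 | hn1
          · have hn2 : n2 = 1 := by omega
            rw [h10 hn1, zero_add]
            exact h21 hn2
          · have hn1' : n1 = 1 := by omega
            have hn2 : n2 = 0 := by omega
            rw [h20 hn2, add_zero]
            exact h11 hn1'
  obtain ⟨n, s, heq, h0, h1⟩ := key _ hmem
  replace heq : m + i * d = n * m + s * d := heq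
  replace h0 : n = 0 → m + i * d = 0 := h0
  rcases Nat.lt_or_ge n 2 with hn | hn
  · interval_cases n
    · have := h0 rfl
      omega
    · exact (h1 rfl).2 rfl
  · -- n ≥ 2
    obtain ⟨q, rfl⟩ : ∃ q, n = q + 1 := ⟨n - 1, by omega⟩
    have hq : 1 ≤ q := by omega
    have heq' : i * d = q * m + s * d := by
      have : (q + 1) * m = m + q * m := by ring
      omega
    have hs_le : s * d ≤ i * d := by omega
    have hsi : s ≤ i := Nat.le_of_mul_le_mul_right hs_le (by omega)
    have hsub : (i - s) * d = q * m := by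
      rw [Nat.sub_mul]
      omega
    have hdvd : m ∣ (i - s) * d := hsub ▸ dvd_mul_left m q
    have hcop : Nat.Coprime m d := hgcd
    have hdvd' : m ∣ (i - s) := (Nat.Coprime.dvd_of_dvd_mul_right hcop) hdvd
    have hpos : 0 < i - s := by
      rcases Nat.eq_zero_or_pos (i - s) with h | h
      · rw [h, zero_mul] at hsub
        have : 0 < q * m := Nat.mul_pos (by omega) (by omega)
        omega
      · exact h
    have := Nat.le_of_dvd hpos hdvd'
    omega
end

section
/- Let S = ⟨n₁, …, n_k⟩ be a numerical semigroup with n₁ < ⋯ < n_k a minimal set of generators and k ≥ 2. Then for every nonzero n ∈ S, L(n)/ℓ(n) ≤ n_k/n₁, and equality holds for n = n₁n_k. Hence the elasticity ρ(S) = sup{L(n)/ℓ(n) : 0 ≠ n ∈ S} equals n_k/n₁ and is attained. -/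
/-- The set of factorization lengths of `n` over the generators `gens`. -/
def lenSet (k : ℕ) (gens : Fin k → ℕ) (n : ℕ) : Set ℕ :=
  {l | ∃ x : Fin k → ℕ, n = ∑ i, x i * gens i ∧ l = ∑ i, x i}

/-- The elasticity ρ(n) = L(n)/ℓ(n) of `n`, as a rational number. -/
noncomputable def rho (k : ℕ) (gens : Fin k → ℕ) (n : ℕ) : ℚ :=
  ((sSup (lenSet k gens n) : ℕ) : ℚ) / ((sInf (lenSet k gens n) : ℕ) : ℚ)

lemma exists_fact {k : ℕ} {gens : Fin k → ℕ} {n : ℕ}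
    (hn : n ∈ AddSubmonoid.closure (Set.range gens)) :
    ∃ x : Fin k → ℕ, n = ∑ i, x i * gens i := by
  induction hn using AddSubmonoid.closure_induction with
  | mem a ha =>
    obtain ⟨i, rfl⟩ := ha
    exact ⟨fun j => if j = i then 1 else 0, by simp [ite_mul, Finset.sum_ite_eq']⟩
  | zero => exact ⟨0, by simp⟩
  | add a b _ _ ha hb =>
    obtain ⟨x, rfl⟩ := ha; obtain ⟨y, rfl⟩ := hb
    exact ⟨x + y, by simp [add_mul, Finset.sum_add_distrib]⟩

lemma len_bounds {k : ℕ} (hk : 2 ≤ k) {gens : Fin k → ℕ} (hmono : StrictMono gens)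
    {n l : ℕ} (hl : l ∈ lenSet k gens n) :
    gens ⟨0, Nat.lt_of_lt_of_le two_pos hk⟩ * l ≤ n ∧
      n ≤ gens ⟨k - 1, Nat.sub_lt (Nat.lt_of_lt_of_le two_pos hk) one_pos⟩ * l := by
  obtain ⟨x, rfl, rfl⟩ := hl
  constructor
  · rw [Finset.mul_sum]
    refine Finset.sum_le_sum fun i _ => ?_
    rw [mul_comm]
    exact Nat.mul_le_mul_left _ (hmono.monotone (by exact Fin.mk_le_of_le_val (Nat.zero_le _)))
  · rw [Finset.mul_sum]
    refine Finset.sum_le_sum fun i _ => ?_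
    rw [mul_comm (gens _)]
    refine Nat.mul_le_mul_left _ (hmono.monotone ?_)
    rw [Fin.le_def]
    have := i.isLt
    simp
    omega

/-- For a minimally generated numerical semigroup S = ⟨n₁ < ⋯ < n_k⟩ with k ≥ 2:
ρ(n) ≤ n_k/n₁ for all nonzero n ∈ S, with equality at n = n₁n_k; hence the
elasticity ρ(S) equals n_k/n₁ and is attained. -/
theorem stmt_11 (k : ℕ) (hk : 2 ≤ k) (gens : Fin k → ℕ)
    (hmono : StrictMono gens)
    (hmin : ∀ i, gens i ∉ AddSubmonoid.closure (Set.range gens \ {gens i})) :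
    (∀ n : ℕ, n ≠ 0 → n ∈ AddSubmonoid.closure (Set.range gens) →
        rho k gens n ≤ (gens ⟨k - 1, by omega⟩ : ℚ) / (gens ⟨0, by omega⟩ : ℚ)) ∧
    rho k gens (gens ⟨0, by omega⟩ * gens ⟨k - 1, by omega⟩) =
      (gens ⟨k - 1, by omega⟩ : ℚ) / (gens ⟨0, by omega⟩ : ℚ) ∧
    IsGreatest {q : ℚ | ∃ n : ℕ, n ≠ 0 ∧ n ∈ AddSubmonoid.closure (Set.range gens) ∧
        q = rho k gens n}
      ((gens ⟨k - 1, by omega⟩ : ℚ) / (gens ⟨0, by omega⟩ : ℚ)) := by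
  set i0 : Fin k := ⟨0, by omega⟩
  set iK : Fin k := ⟨k - 1, by omega⟩
  have hg0 : 0 < gens i0 := by
    refine Nat.pos_of_ne_zero fun h => ?_
    have := hmin i0
    rw [h] at this
    exact this (AddSubmonoid.zero_mem _)
  have hgK : 0 < gens iK := hg0.trans_le (hmono.monotone (Fin.mk_le_of_le_val (Nat.zero_le _)))
  have hpart1 : ∀ n : ℕ, n ≠ 0 → n ∈ AddSubmonoid.closure (Set.range gens) →
      rho k gens n ≤ (gens iK : ℚ) / (gens i0 : ℚ) := by
    intro n hn hmem
    obtain ⟨x, hx⟩ := exists_fact hmem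
    have hne : (lenSet k gens n).Nonempty := ⟨∑ i, x i, x, hx, rfl⟩
    have hbdd : BddAbove (lenSet k gens n) := by
      refine ⟨n, fun l hl => ?_⟩
      have := (len_bounds hk hmono hl).1
      calc l ≤ gens i0 * l := Nat.le_mul_of_pos_left _ hg0
        _ ≤ n := this
    have hL : sSup (lenSet k gens n) ∈ lenSet k gens n := Nat.sSup_mem hne hbdd
    have hl : sInf (lenSet k gens n) ∈ lenSet k gens n := Nat.sInf_mem hne
    have hLb := (len_bounds hk hmono hL).1
    have hlb := (len_bounds hk hmono hl).2
    have hlpos : 0 < sInf (lenSet k gens n) := by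
      rcases Nat.eq_zero_or_pos (sInf (lenSet k gens n)) with h | h
      · rw [h, mul_zero] at hlb; omega
      · exact h
    rw [rho, div_le_div_iff₀ (by exact_mod_cast hlpos) (by exact_mod_cast hg0)]
    have key : sSup (lenSet k gens n) * gens i0 ≤ gens iK * sInf (lenSet k gens n) := by
      calc sSup (lenSet k gens n) * gens i0 = gens i0 * sSup (lenSet k gens n) := mul_comm _ _
        _ ≤ n := hLb
        _ ≤ gens iK * sInf (lenSet k gens n) := hlb
    exact_mod_cast key
  have hmemK : gens i0 * gens iK ∈ AddSubmonoid.closure (Set.range gens) := by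
    have : gens iK ∈ AddSubmonoid.closure (Set.range gens) :=
      AddSubmonoid.subset_closure ⟨iK, rfl⟩
    simpa using AddSubmonoid.nsmul_mem _ this (gens i0)
  have hnne : gens i0 * gens iK ≠ 0 := Nat.mul_ne_zero hg0.ne' hgK.ne'
  have hpart2 : rho k gens (gens i0 * gens iK) = (gens iK : ℚ) / (gens i0 : ℚ) := by
    have hsum : ∀ (c : ℕ) (t : Fin k), ∑ j, (if j = t then c else 0) * gens j = c * gens t := by
      intro c t
      rw [Finset.sum_eq_single t (fun b _ hb => by simp [hb]) (by simp)]
      simp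
    have hsum2 : ∀ (c : ℕ) (t : Fin k), ∑ j, (if j = t then c else 0) = c := by
      intro c t
      rw [Finset.sum_eq_single t (fun b _ hb => by simp [hb]) (by simp)]
      simp
    set n := gens i0 * gens iK with hn
    have memK : gens iK ∈ lenSet k gens n :=
      ⟨fun j => if j = i0 then gens iK else 0, by rw [hsum, hn, mul_comm], (hsum2 _ _).symm⟩
    have mem0 : gens i0 ∈ lenSet k gens n :=
      ⟨fun j => if j = iK then gens i0 else 0, by rw [hsum, hn], (hsum2 _ _).symm⟩
    have hbdd : BddAbove (lenSet k gens n) := by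
      refine ⟨gens iK, fun l hl => ?_⟩
      have := (len_bounds hk hmono hl).1
      exact Nat.le_of_mul_le_mul_left this hg0
    have hsup : sSup (lenSet k gens n) = gens iK := by
      apply le_antisymm
      · exact csSup_le ⟨_, memK⟩ fun l hl =>
          Nat.le_of_mul_le_mul_left ((len_bounds hk hmono hl).1.trans_eq rfl) hg0
      · exact le_csSup hbdd memK
    have hinf : sInf (lenSet k gens n) = gens i0 := by
      apply le_antisymm
      · exact csInf_le (OrderBot.bddBelow _) mem0
      · refine le_csInf ⟨_, mem0⟩ fun l hl => ?_
        have := (len_bounds hk hmono hl).2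
        rw [hn, mul_comm (gens i0)] at this
        exact Nat.le_of_mul_le_mul_left this hgK
    rw [rho, hsup, hinf]
  refine ⟨hpart1, hpart2, ⟨⟨gens i0 * gens iK, hnne, hmemK, hpart2.symm⟩, ?_⟩⟩
  rintro q ⟨n, hn, hmem, rfl⟩
  exact hpart1 n hn hmem
end

section
/- Let S = ⟨a, a+d, …, a+kd⟩ with gcd(a,d) = 1 and 1 ≤ k ≤ a−1, and let n ∈ S be written as n = c₁a + c₂d with c₁, c₂ ∈ ℤ≥0 and 0 ≤ c₂ < a. Then the set of factorization lengths of n is L(n) = {c₁ + jd : j ∈ ℤ, (c₂ − c₁k)/(a + kd) ≤ j ≤ 0}. -/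
lemma stmt_17_sumkey (a d k : ℕ) (x : Fin (k + 1) → ℕ) :
    ∑ i, x i * (a + (i : ℕ) * d) =
      (∑ i : Fin (k + 1), x i) * a + (∑ i : Fin (k + 1), (i : ℕ) * x i) * d := by
  rw [Finset.sum_mul, Finset.sum_mul, ← Finset.sum_add_distrib]
  exact Finset.sum_congr rfl (fun i _ => by ring)

lemma stmt_17_aux (k : ℕ) : ∀ l m : ℕ, m ≤ l * k →
    ∃ x : Fin (k + 1) → ℕ, (∑ i : Fin (k + 1), x i) = l ∧ (∑ i : Fin (k + 1), (i : ℕ) * x i) = m := by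
  intro l
  induction l with
  | zero =>
    intro m hm
    have : m = 0 := by omega
    exact ⟨0, by simp, by simp [this]⟩
  | succ l ih =>
    intro m hm
    have ht : min m k ≤ k := min_le_right _ _
    obtain ⟨x, hx1, hx2⟩ := ih (m - min m k) (by rw [Nat.succ_mul] at hm; omega)
    refine ⟨fun i => x i + (if i = ⟨min m k, by omega⟩ then 1 else 0), ?_, ?_⟩
    · rw [Finset.sum_add_distrib, hx1]
      simp [Finset.sum_ite_eq']
    · have : ∀ i : Fin (k + 1),
          (i : ℕ) * (x i + (if i = ⟨min m k, by omega⟩ then 1 else 0)) =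
          (i : ℕ) * x i + (if i = (⟨min m k, by omega⟩ : Fin (k + 1)) then (i : ℕ) else 0) := by
        intro i
        by_cases h : i = (⟨min m k, by omega⟩ : Fin (k + 1)) <;> simp [h, mul_add]
      simp only [this]
      rw [Finset.sum_add_distrib, hx2, Finset.sum_ite_eq']
      simp

/-- For an arithmetical numerical semigroup S = ⟨a, a+d, …, a+kd⟩ with gcd(a,d)=1 and
1 ≤ k ≤ a−1, if n ∈ S is written as n = c₁a + c₂d with 0 ≤ c₂ < a, then the set of
factorization lengths of n is {c₁ + jd : j ∈ ℤ, (c₂ − c₁k)/(a + kd) ≤ j ≤ 0}. -/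
theorem stmt_17 (a d k : ℕ) (ha : 2 ≤ a) (hgcd : Nat.gcd a d = 1)
    (hk1 : 1 ≤ k) (hk2 : k ≤ a - 1)
    (n c₁ c₂ : ℕ) (hc₂ : c₂ < a) (hrep : n = c₁ * a + c₂ * d)
    (hn : n ∈ AddSubmonoid.closure ((fun i => a + i * d) '' {i : ℕ | i ≤ k})) :
    {l : ℕ | ∃ x : Fin (k + 1) → ℕ, n = ∑ i, x i * (a + (i : ℕ) * d) ∧ l = ∑ i, x i} =
      {l : ℕ | ∃ j : ℤ, ((c₂ : ℚ) - (c₁ : ℚ) * (k : ℚ)) / ((a : ℚ) + (k : ℚ) * (d : ℚ)) ≤ (j : ℚ) ∧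
        j ≤ 0 ∧ (l : ℤ) = (c₁ : ℤ) + j * (d : ℤ)} := by
  have hd : 0 < d := by
    rcases Nat.eq_zero_or_pos d with h | h
    · rw [h] at hgcd; simp at hgcd; omega
    · exact h
  have haQ : (0 : ℚ) < a := by exact_mod_cast (by omega : 0 < a)
  have hApos : (0 : ℚ) < (a : ℚ) + (k : ℚ) * (d : ℚ) := by positivity
  ext l
  simp only [Set.mem_setOf_eq]
  constructor
  · rintro ⟨x, hnx, hl⟩
    have hkey := stmt_17_sumkey a d k x
    set m := ∑ i : Fin (k + 1), (i : ℕ) * x i with hm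
    have hmle : m ≤ l * k := by
      have h1 : m ≤ ∑ i : Fin (k + 1), x i * k := by
        apply Finset.sum_le_sum
        intro i _
        rw [mul_comm]
        exact Nat.mul_le_mul_left _ (Nat.le_of_lt_succ i.isLt)
      rw [← Finset.sum_mul, ← hl] at h1
      exact h1
    have heq : l * a + m * d = c₁ * a + c₂ * d := by
      rw [hl, ← hkey, ← hnx, hrep]
    have heqZ : (l : ℤ) * a + m * d = (c₁ : ℤ) * a + c₂ * d := by exact_mod_cast heq
    have hz : ((l : ℤ) - c₁) * a = ((c₂ : ℤ) - m) * d := by ring_nf; linarith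
    have hcop : IsCoprime (d : ℤ) (a : ℤ) := by
      rw [Int.isCoprime_iff_gcd_eq_one]
      simpa [Int.gcd, Nat.gcd_comm] using hgcd
    have hdvd : (d : ℤ) ∣ ((l : ℤ) - c₁) := by
      apply hcop.dvd_of_dvd_mul_right
      rw [hz]
      exact Dvd.intro_left _ rfl
    obtain ⟨j, hj⟩ := hdvd
    have hdZ : (0 : ℤ) < d := by exact_mod_cast hd
    have hja : j * a = (c₂ : ℤ) - m := by
      have h2 : (d : ℤ) * (j * a) = (d : ℤ) * ((c₂ : ℤ) - m) := by
        rw [← mul_assoc, ← hj]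
        linarith [hz]
      exact mul_left_cancel₀ (by positivity) h2
    have hlZ : (l : ℤ) = c₁ + d * j := by linarith [hj]
    have hmleZ : (m : ℤ) ≤ (l : ℤ) * k := by exact_mod_cast hmle
    have hm0 : (0 : ℤ) ≤ m := by positivity
    refine ⟨j, ?_, ?_, ?_⟩
    · rw [div_le_iff₀ hApos]
      have hZ : (c₂ : ℤ) - c₁ * k ≤ j * (a + k * d) := by nlinarith [hmleZ, hja, hlZ]
      exact_mod_cast hZ
    · by_contra h
      push_neg at h
      have h1 : (1 : ℤ) ≤ j := h
      have h2 : (a : ℤ) ≤ j * a := le_mul_of_one_le_left (by positivity) h1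
      have h3 : (c₂ : ℤ) < a := by exact_mod_cast hc₂
      linarith
    · linarith [hlZ, mul_comm j (d : ℤ)]
  · rintro ⟨j, hj1, hj2, hl⟩
    have hZ : (c₂ : ℤ) - c₁ * k ≤ j * (a + k * d) := by
      have := (div_le_iff₀ hApos).mp hj1
      exact_mod_cast this
    set m : ℤ := (c₂ : ℤ) - j * a with hmdef
    have hm0 : 0 ≤ m := by
      have h1 : j * (a : ℤ) ≤ 0 := mul_nonpos_of_nonpos_of_nonneg hj2 (by positivity)
      have h2 : (0 : ℤ) ≤ (c₂ : ℤ) := by positivity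
      simp only [hmdef]
      linarith
    have hmlk : m ≤ (l : ℤ) * k := by
      have h3 : j * ((a : ℤ) + k * d) = j * a + j * k * d := by ring
      have h4 : (l : ℤ) * k = c₁ * k + j * k * d := by rw [hl]; ring
      simp only [hmdef]
      linarith
    obtain ⟨M, hM⟩ := Int.eq_ofNat_of_zero_le hm0
    have hMlk : M ≤ l * k := by
      rw [hM] at hmlk
      exact_mod_cast hmlk
    obtain ⟨x, hx1, hx2⟩ := stmt_17_aux k l M hMlk
    refine ⟨x, ?_, hx1.symm⟩
    have hkey := stmt_17_sumkey a d k x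
    rw [hkey, hx1, hx2]
    have hM' : (M : ℤ) = (c₂ : ℤ) - j * a := by rw [← hM]
    have h1 : (n : ℤ) = (c₁ : ℤ) * a + (c₂ : ℤ) * d := by exact_mod_cast congrArg (Nat.cast : ℕ → ℤ) hrep
    have hnZ : (n : ℤ) = (l : ℤ) * a + M * d := by
      linear_combination h1 - (a : ℤ) * hl - (d : ℤ) * hM'
    exact_mod_cast hnZ
end

section
/- If n₂ > n₁ > 1 are coprime integers and S = ⟨n₁, n₂⟩, then Δ(S) = {n₂ − n₁}; that is, for every n ∈ S with at least two factorizations, consecutive factorization lengths differ by exactly n₂ − n₁. -/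
/-- The set of factorization lengths of `n` over the generators `n₁, n₂`. -/
def lenSet2 (n₁ n₂ n : ℕ) : Set ℕ :=
  {l | ∃ x₁ x₂ : ℕ, n = x₁ * n₁ + x₂ * n₂ ∧ l = x₁ + x₂}

/-- The delta set Δ(n): gaps between consecutive factorization lengths of n. -/
def deltaSet2 (n₁ n₂ n : ℕ) : Set ℕ :=
  {d | 0 < d ∧ ∃ l, l ∈ lenSet2 n₁ n₂ n ∧ l + d ∈ lenSet2 n₁ n₂ n ∧
    ∀ j, l < j → j < l + d → j ∉ lenSet2 n₁ n₂ n}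

/-- If n₂ > n₁ > 1 are coprime, then Δ(⟨n₁,n₂⟩) = {n₂ − n₁}. -/
theorem stmt_18 (n₁ n₂ : ℕ) (h1 : 1 < n₁) (h12 : n₁ < n₂)
    (hgcd : Nat.Coprime n₁ n₂) :
    {d : ℕ | ∃ n : ℕ, n ≠ 0 ∧ n ∈ AddSubmonoid.closure ({n₁, n₂} : Set ℕ) ∧
        d ∈ deltaSet2 n₁ n₂ n} = {n₂ - n₁} := by
  have hk : 0 < n₂ - n₁ := by omega
  have hcop : Nat.Coprime (n₂ - n₁) n₁ :=
    (Nat.coprime_sub_self_left h12.le).mpr hgcd.symm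
  ext d
  simp only [Set.mem_setOf_eq, Set.mem_singleton_iff]
  constructor
  · rintro ⟨n, hn0, -, hd, l, ⟨x₁, x₂, hx, hlx⟩, ⟨y₁, y₂, hy, hly⟩, hmin⟩
    -- first: x₁ < y₁
    have hxy : x₁ < y₁ := by
      by_contra h
      push_neg at h
      obtain ⟨a, ha⟩ := Nat.le.dest h  -- y₁ + a = x₁
      have h1' : a * n₁ + x₂ * n₂ = y₂ * n₂ := by
        have h2' := hx.symm.trans hy
        rw [← ha, add_mul] at h2'
        linarith
      have hby : x₂ ≤ y₂ :=
        Nat.le_of_mul_le_mul_right (by linarith [Nat.zero_le (a * n₁)]) (by omega : 0 < n₂)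
      obtain ⟨b, hb⟩ := Nat.le.dest hby  -- x₂ + b = y₂
      have hbn : b * n₂ = a * n₁ := by
        rw [← hb, add_mul] at h1'; linarith
      have hba : b ≤ a := by
        have h3' : a * n₁ ≤ a * n₂ := Nat.mul_le_mul_left a h12.le
        exact Nat.le_of_mul_le_mul_right (by omega) (by omega : 0 < n₂)
      omega
    obtain ⟨a, ha⟩ := Nat.le.dest hxy.le  -- x₁ + a = y₁
    have h1' : a * n₁ + y₂ * n₂ = x₂ * n₂ := by
      have h2' := hy.symm.trans hx
      rw [← ha, add_mul] at h2'
      linarith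
    have hby : y₂ ≤ x₂ :=
      Nat.le_of_mul_le_mul_right (by linarith [Nat.zero_le (a * n₁)]) (by omega : 0 < n₂)
    obtain ⟨b, hb⟩ := Nat.le.dest hby  -- y₂ + b = x₂
    have hbn : b * n₂ = a * n₁ := by
      rw [← hb, add_mul] at h1'; linarith
    have hab : a = b + d := by omega
    have hn2a : n₂ ∣ a :=
      Nat.Coprime.dvd_of_dvd_mul_right hgcd.symm ⟨b, by rw [← hbn, mul_comm]⟩
    have hdk : (n₂ - n₁) ∣ d := by
      refine Nat.Coprime.dvd_of_dvd_mul_right hcop ⟨b, ?_⟩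
      have e1 : b * n₂ = b * n₁ + d * n₁ := by
        rw [hab, add_mul] at hbn; linarith
      have e2 : (n₂ - n₁) * b + n₁ * b = n₂ * b := by
        rw [← add_mul, Nat.sub_add_cancel h12.le]
      have e3 : b * n₂ = n₂ * b := mul_comm _ _
      have e4 : b * n₁ = n₁ * b := mul_comm _ _
      linarith
    have hdge : n₂ - n₁ ≤ d := Nat.le_of_dvd hd hdk
    rcases eq_or_lt_of_le hdge with heq | hlt
    · omega
    · exfalso
      have han : n₂ ≤ a := Nat.le_of_dvd (by omega) hn2a
      have hyn : n₂ ≤ y₁ := by omega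
      obtain ⟨z, hz⟩ := Nat.le.dest hyn  -- n₂ + z = y₁
      refine hmin (l + d - (n₂ - n₁)) (by omega) (by omega)
        ⟨z, y₂ + n₁, ?_, by omega⟩
      rw [hy, ← hz]; ring
  · rintro rfl
    refine ⟨n₁ * n₂, Nat.mul_ne_zero (by omega) (by omega), ?_, hk, n₁, ⟨0, n₁, by ring, by ring⟩,
      ⟨n₂, 0, by ring, by omega⟩, ?_⟩
    · have h2 : n₂ ∈ AddSubmonoid.closure ({n₁, n₂} : Set ℕ) :=
        AddSubmonoid.subset_closure (by simp)
      simpa [smul_eq_mul] using nsmul_mem h2 n₁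
    · rintro j hj1 hj2 ⟨x₁, x₂, he, rfl⟩
      have hx2 : x₂ ≤ n₁ :=
        Nat.le_of_mul_le_mul_right (by linarith [Nat.zero_le (x₁ * n₁)]) (by omega : 0 < n₂)
      have hdvd : n₂ ∣ x₁ := by
        refine Nat.Coprime.dvd_of_dvd_mul_right hgcd.symm ⟨n₁ - x₂, ?_⟩
        have e : (n₁ - x₂) * n₂ + x₂ * n₂ = n₁ * n₂ := by
          rw [← add_mul, Nat.sub_add_cancel hx2]
        rw [mul_comm n₂]
        linarith
      rcases Nat.eq_zero_or_pos x₁ with h0 | hpos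
      · subst h0
        simp only [zero_mul, zero_add] at he
        have : x₂ = n₁ := Nat.eq_of_mul_eq_mul_right (by omega) (by linarith)
        omega
      · have : n₂ ≤ x₁ := Nat.le_of_dvd hpos hdvd
        omega
end
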